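/- Suppose the DM-TWC satisfies condition (a) and condition (b2). Then for every stochastic kernel x₁ ↦ P_{X₂|X₁=x₁} from 𝒳₁ to distributions on 𝒳₂, writing P̄_{X₂} = Σ_{x₁} P*_{X₁}(x₁)·P_{X₂|X₁=x₁} for the averaged input, one has Σ_{x₁} P*_{X₁}(x₁)·𝓘(P_{X₂|X₁=x₁}, P_{Y₁|X₁=x₁,X₂}) ≤ Σ_{x₁} P*_{X₁}(x₁)·𝓘(P̄_{X₂}, P_{Y₁|X₁=x₁,X₂}); that is, using the average input at terminal 2 incurs no information loss when terminal 1 uses the common optimal input P*_{X₁}. -/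

import Mathlib

open scoped BigOperators

/-- `P` is a probability distribution on the finite alphabet `A`. -/
def IsDist {A : Type*} [Fintype A] (P : A → ℝ) : Prop :=
  (∀ a, 0 ≤ P a) ∧ ∑ a, P a = 1

/-- Input–output mutual information 𝓘(P, W) (in bits) of a channel `W`
from the finite alphabet `A` to the finite alphabet `B` under input distribution `P`. -/
noncomputable def mutInfo {A B : Type*} [Fintype A] [Fintype B]
    (P : A → ℝ) (W : A → B → ℝ) : ℝ :=
  ∑ a, ∑ b, P a * W a b * Real.logb 2 (W a b / ∑ a', P a' * W a' b)

/-- Shannon entropy (base 2) of a distribution on a finite alphabet. -/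
noncomputable def ent {B : Type*} [Fintype B] (Q : B → ℝ) : ℝ :=
  -∑ b, Q b * Real.logb 2 (Q b)

section TWC

variable {X1 X2 Y1 Y2 : Type*} [Fintype X1] [Fintype X2] [Fintype Y1] [Fintype Y2]

/-- A joint input distribution on `X1 × X2`. -/
def IsJointDist (P : X1 → X2 → ℝ) : Prop :=
  (∀ x1 x2, 0 ≤ P x1 x2) ∧ ∑ x1, ∑ x2, P x1 x2 = 1

/-- Marginal of a joint input distribution on `X1`. -/
noncomputable def margin1 (P : X1 → X2 → ℝ) (x1 : X1) : ℝ := ∑ x2, P x1 x2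

/-- Marginal of a joint input distribution on `X2`. -/
noncomputable def margin2 (P : X1 → X2 → ℝ) (x2 : X2) : ℝ := ∑ x1, P x1 x2

/-- Conditional distribution P_{X₁|X₂=x₂}. -/
noncomputable def cond1given2 (P : X1 → X2 → ℝ) (x2 : X2) (x1 : X1) : ℝ :=
  P x1 x2 / margin2 P x2

/-- Conditional distribution P_{X₂|X₁=x₁}. -/
noncomputable def cond2given1 (P : X1 → X2 → ℝ) (x1 : X1) (x2 : X2) : ℝ :=
  P x1 x2 / margin1 P x1

/-- The conditional mutual information I(X₁;Y₂|X₂) under the joint input distribution `P`,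
where `W2` is the marginal channel P_{Y₂|X₁,X₂}. -/
noncomputable def condMI12 (P : X1 → X2 → ℝ) (W2 : X1 → X2 → Y2 → ℝ) : ℝ :=
  ∑ x2, margin2 P x2 * mutInfo (cond1given2 P x2) (fun x1 => W2 x1 x2)

/-- The conditional mutual information I(X₂;Y₁|X₁) under the joint input distribution `P`,
where `W1` is the marginal channel P_{Y₁|X₁,X₂}. -/
noncomputable def condMI21 (P : X1 → X2 → ℝ) (W1 : X1 → X2 → Y1 → ℝ) : ℝ :=
  ∑ x1, margin1 P x1 * mutInfo (cond2given1 P x1) (fun x2 => W1 x1 x2)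

/-- The rate region 𝓡(P_{X₁,X₂}). -/
noncomputable def rateRegion (W1 : X1 → X2 → Y1 → ℝ) (W2 : X1 → X2 → Y2 → ℝ)
    (P : X1 → X2 → ℝ) : Set (ℝ × ℝ) :=
  {r | 0 ≤ r.1 ∧ r.1 ≤ condMI12 P W2 ∧ 0 ≤ r.2 ∧ r.2 ≤ condMI21 P W1}

/-- Shannon's inner bound C_I: the closure of the convex hull of the union of the
rate regions of all product input distributions. -/
noncomputable def innerBound (W1 : X1 → X2 → Y1 → ℝ) (W2 : X1 → X2 → Y2 → ℝ) :
    Set (ℝ × ℝ) :=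
  closure (convexHull ℝ
    (⋃ P ∈ {P : X1 → X2 → ℝ |
        ∃ P1 P2, IsDist P1 ∧ IsDist P2 ∧ P = fun x1 x2 => P1 x1 * P2 x2},
      rateRegion W1 W2 P))

/-- Shannon's outer bound C_O: the union of the rate regions of all joint input
distributions. -/
noncomputable def outerBound (W1 : X1 → X2 → Y1 → ℝ) (W2 : X1 → X2 → Y2 → ℝ) :
    Set (ℝ × ℝ) :=
  ⋃ P ∈ {P : X1 → X2 → ℝ | IsJointDist P}, rateRegion W1 W2 P

/-- The largest input–output mutual information of the one-way channel
P_{Y₂|X₁,X₂=x₂}. -/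
noncomputable def capAt (W2 : X1 → X2 → Y2 → ℝ) (x2 : X2) : ℝ :=
  sSup {I | ∃ P : X1 → ℝ, IsDist P ∧ I = mutInfo P (fun x1 => W2 x1 x2)}

/-- α*: how close the channels {P_{Y₂|X₁,X₂=x₂}} are to having a common optimal
input distribution. -/
noncomputable def alphaStar (W2 : X1 → X2 → Y2 → ℝ) : ℝ :=
  sInf {a | ∃ Pt : X1 → ℝ, IsDist Pt ∧
    a = ⨆ x2, |mutInfo Pt (fun x1 => W2 x1 x2) - capAt W2 x2|}

/-- β*: the degree of invariance in the input–output mutual information of the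
channels {P_{Y₁|X₁=x₁,X₂}}. -/
noncomputable def betaStar (W1 : X1 → X2 → Y1 → ℝ) : ℝ :=
  sSup {b | ∃ (P : X2 → ℝ) (x1 x1' : X1), IsDist P ∧ x1 ≠ x1' ∧
    b = |mutInfo P (fun x2 => W1 x1 x2) - mutInfo P (fun x2 => W1 x1' x2)|}

/-- I*₁ = max_{x₂} max_{P} 𝓘(P, P_{Y₂|X₁,X₂=x₂}). -/
noncomputable def IStar1 (W2 : X1 → X2 → Y2 → ℝ) : ℝ :=
  sSup {I | ∃ (x2 : X2) (P : X1 → ℝ), IsDist P ∧ I = mutInfo P (fun x1 => W2 x1 x2)}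

/-- I*₂ = max_{x₁} max_{P} 𝓘(P, P_{Y₁|X₁=x₁,X₂}). -/
noncomputable def IStar2 (W1 : X1 → X2 → Y1 → ℝ) : ℝ :=
  sSup {I | ∃ (x1 : X1) (P : X2 → ℝ), IsDist P ∧ I = mutInfo P (fun x2 => W1 x1 x2)}

/-- Condition (a): `Pstar` is a common optimal input distribution for the channels
{P_{Y₂|X₁,X₂=x₂} : x₂ ∈ 𝒳₂}. -/
def CondA (W2 : X1 → X2 → Y2 → ℝ) (Pstar : X1 → ℝ) : Prop :=
  IsDist Pstar ∧ ∀ x2 : X2, ∀ P : X1 → ℝ, IsDist P →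
    mutInfo P (fun x1 => W2 x1 x2) ≤ mutInfo Pstar (fun x1 => W2 x1 x2)

/-- Condition (b1): for every input distribution on 𝒳₂, the input–output mutual
information of P_{Y₁|X₁=x₁,X₂} does not depend on x₁. -/
def CondB1 (W1 : X1 → X2 → Y1 → ℝ) : Prop :=
  ∀ P : X2 → ℝ, IsDist P → ∀ x1 x1' : X1,
    mutInfo P (fun x2 => W1 x1 x2) = mutInfo P (fun x2 => W1 x1' x2)

/-- H(Y₁|X₁,X₂) under the joint input distribution `P`. -/
noncomputable def condEntFull (P : X1 → X2 → ℝ) (W1 : X1 → X2 → Y1 → ℝ) : ℝ :=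
  ∑ x1, ∑ x2, P x1 x2 * ent (W1 x1 x2)

/-- H(Y₁|X₁) under the joint input distribution `P`. -/
noncomputable def condEntY1X1 (P : X1 → X2 → ℝ) (W1 : X1 → X2 → Y1 → ℝ) : ℝ :=
  ∑ x1, margin1 P x1 * ent (fun y1 => ∑ x2, cond2given1 P x1 x2 * W1 x1 x2 y1)

/-- Condition (b2), part (i): H(Y₁|X₁,X₂) depends on the joint input distribution
only through its marginal on 𝒳₂. -/
def CondB2i (W1 : X1 → X2 → Y1 → ℝ) : Prop :=
  ∀ P Q : X1 → X2 → ℝ, IsJointDist P → IsJointDist Q →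
    margin2 P = margin2 Q → condEntFull P W1 = condEntFull Q W1

/-- Condition (b2), part (ii), relative to the common optimal input `Pstar`:
H⁽¹⁾(Y₁|X₁) ≤ H⁽²⁾(Y₁|X₁) where P⁽²⁾ = P*_{X₁}·P⁽¹⁾_{X₂}. -/
def CondB2ii (W1 : X1 → X2 → Y1 → ℝ) (Pstar : X1 → ℝ) : Prop :=
  ∀ P : X1 → X2 → ℝ, IsJointDist P →
    condEntY1X1 P W1 ≤ condEntY1X1 (fun x1 x2 => Pstar x1 * margin2 P x2) W1



lemma mutInfo_decomp {A B : Type*} [Fintype A] [Fintype B] (P : A → ℝ) (W : A → B → ℝ)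
    (hP : ∀ a, 0 ≤ P a) (hW : ∀ a b, 0 ≤ W a b) :
    mutInfo P W = ent (fun b => ∑ a, P a * W a b) - ∑ a, P a * ent (W a) := by
  unfold mutInfo ent
  have key : ∀ a b, P a * W a b * Real.logb 2 (W a b / ∑ a', P a' * W a' b)
      = P a * W a b * Real.logb 2 (W a b)
        - P a * W a b * Real.logb 2 (∑ a', P a' * W a' b) := by
    intro a b
    by_cases hPa : P a = 0
    · simp [hPa]
    by_cases hWab : W a b = 0
    · simp [hWab]
    have hPa' : 0 < P a := lt_of_le_of_ne (hP a) (Ne.symm hPa)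
    have hWab' : 0 < W a b := lt_of_le_of_ne (hW a b) (Ne.symm hWab)
    have hsum : 0 < ∑ a', P a' * W a' b :=
      lt_of_lt_of_le (mul_pos hPa' hWab')
        (Finset.single_le_sum (f := fun a' => P a' * W a' b)
          (fun i _ => mul_nonneg (hP i) (hW i b)) (Finset.mem_univ a))
    rw [Real.logb_div hWab (ne_of_gt hsum), mul_sub]
  simp_rw [key, Finset.sum_sub_distrib]
  rw [Finset.sum_comm (f := fun a b => P a * W a b * Real.logb 2 (∑ a', P a' * W a' b))]
  have h1 : ∀ b : B, ∑ a, P a * W a b * Real.logb 2 (∑ a', P a' * W a' b)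
      = (∑ a', P a' * W a' b) * Real.logb 2 (∑ a', P a' * W a' b) := by
    intro b; rw [Finset.sum_mul]
  have h2 : ∀ a : A, ∑ b, P a * W a b * Real.logb 2 (W a b)
      = P a * ∑ b, W a b * Real.logb 2 (W a b) := by
    intro a; rw [Finset.mul_sum]; simp [mul_assoc]
  simp_rw [h1, h2]
  simp only [mul_neg, Finset.sum_neg_distrib]
  ring

/-- under conditions (a) and (b2), using the averaged input
P̄_{X₂} = Σ_{x₁} P*_{X₁}(x₁) P_{X₂|X₁=x₁} at terminal 2 incurs no information loss
when terminal 1 uses the common optimal input P*_{X₁}. -/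
theorem stmt3 [Nonempty X1] [Nonempty X2]
    (W1 : X1 → X2 → Y1 → ℝ) (W2 : X1 → X2 → Y2 → ℝ)
    (hW1 : ∀ x1 x2, IsDist (W1 x1 x2)) (hW2 : ∀ x1 x2, IsDist (W2 x1 x2))
    (Pstar : X1 → ℝ) (ha : CondA W2 Pstar)
    (hb2i : CondB2i W1) (hb2ii : CondB2ii W1 Pstar)
    (K : X1 → X2 → ℝ) (hK : ∀ x1, IsDist (K x1)) :
    ∑ x1, Pstar x1 * mutInfo (K x1) (fun x2 => W1 x1 x2) ≤
      ∑ x1, Pstar x1 *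
        mutInfo (fun x2 => ∑ x1', Pstar x1' * K x1' x2) (fun x2 => W1 x1 x2) := by
  classical
  obtain ⟨hPsnn, hPssum⟩ := ha.1
  have hKnn : ∀ x1 x2, 0 ≤ K x1 x2 := fun x1 => (hK x1).1
  have hKsum : ∀ x1, ∑ x2, K x1 x2 = 1 := fun x1 => (hK x1).2
  set Kbar : X2 → ℝ := fun x2 => ∑ x1', Pstar x1' * K x1' x2 with hKbardef
  have hKbarnn : ∀ x2, 0 ≤ Kbar x2 := fun x2 =>
    Finset.sum_nonneg fun i _ => mul_nonneg (hPsnn i) (hKnn i x2)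
  have hKbarsum : ∑ x2, Kbar x2 = 1 := by
    rw [hKbardef, Finset.sum_comm]
    simp_rw [← Finset.mul_sum, hKsum, mul_one]
    exact hPssum
  set P : X1 → X2 → ℝ := fun x1 x2 => Pstar x1 * K x1 x2 with hPdef
  set Q : X1 → X2 → ℝ := fun x1 x2 => Pstar x1 * Kbar x2 with hQdef
  have hPJ : IsJointDist P := by
    refine ⟨fun x1 x2 => mul_nonneg (hPsnn x1) (hKnn x1 x2), ?_⟩
    simp_rw [hPdef, ← Finset.mul_sum, hKsum, mul_one]
    exact hPssum
  have hQJ : IsJointDist Q := by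
    refine ⟨fun x1 x2 => mul_nonneg (hPsnn x1) (hKbarnn x2), ?_⟩
    simp_rw [hQdef, ← Finset.mul_sum, hKbarsum, mul_one]
    exact hPssum
  have hm1P : ∀ x1, margin1 P x1 = Pstar x1 := by
    intro x1
    simp [margin1, hPdef, ← Finset.mul_sum, hKsum]
  have hm1Q : ∀ x1, margin1 Q x1 = Pstar x1 := by
    intro x1
    simp [margin1, hQdef, ← Finset.mul_sum, hKbarsum]
  have hm2P : margin2 P = Kbar := by
    funext x2; simp [margin2, hPdef, hKbardef]
  have hm2Q : margin2 Q = Kbar := by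
    funext x2
    simp [margin2, hQdef, ← Finset.sum_mul, hPssum]
  have hEnt : condEntFull P W1 = condEntFull Q W1 :=
    hb2i P Q hPJ hQJ (hm2P.trans hm2Q.symm)
  have hQeq : (fun x1 x2 => Pstar x1 * margin2 P x2) = Q := by
    rw [hm2P]
  have hEntY : condEntY1X1 P W1 ≤ condEntY1X1 Q W1 := by
    have := hb2ii P hPJ
    rwa [hQeq] at this
  have hdec : ∀ x1, mutInfo (K x1) (fun x2 => W1 x1 x2)
      = ent (fun y => ∑ x2, K x1 x2 * W1 x1 x2 y) - ∑ x2, K x1 x2 * ent (W1 x1 x2) :=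
    fun x1 => mutInfo_decomp _ _ (hKnn x1) (fun x2 y => (hW1 x1 x2).1 y)
  have hdec2 : ∀ x1, mutInfo Kbar (fun x2 => W1 x1 x2)
      = ent (fun y => ∑ x2, Kbar x2 * W1 x1 x2 y) - ∑ x2, Kbar x2 * ent (W1 x1 x2) :=
    fun x1 => mutInfo_decomp _ _ hKbarnn (fun x2 y => (hW1 x1 x2).1 y)
  have e1 : ∑ x1, Pstar x1 * ent (fun y => ∑ x2, K x1 x2 * W1 x1 x2 y)
      = condEntY1X1 P W1 := by
    unfold condEntY1X1
    refine Finset.sum_congr rfl fun x1 _ => ?_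
    rw [hm1P]
    by_cases h : Pstar x1 = 0
    · simp [h]
    · have h2 : ∀ x2, cond2given1 P x1 x2 = K x1 x2 := by
        intro x2
        simp only [cond2given1, hm1P, hPdef]
        rw [show margin1 (fun x1 x2 => Pstar x1 * K x1 x2) x1 = Pstar x1 from hm1P x1]
        exact mul_div_cancel_left₀ _ h
      simp only [h2]
  have e2 : ∑ x1, Pstar x1 * ent (fun y => ∑ x2, Kbar x2 * W1 x1 x2 y)
      = condEntY1X1 Q W1 := by
    unfold condEntY1X1
    refine Finset.sum_congr rfl fun x1 _ => ?_
    rw [hm1Q]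
    by_cases h : Pstar x1 = 0
    · simp [h]
    · have h2 : ∀ x2, cond2given1 Q x1 x2 = Kbar x2 := by
        intro x2
        simp only [cond2given1, hm1Q, hQdef]
        rw [show margin1 (fun x1 x2 => Pstar x1 * Kbar x2) x1 = Pstar x1 from hm1Q x1]
        exact mul_div_cancel_left₀ _ h
      simp only [h2]
  have e3 : ∑ x1, Pstar x1 * ∑ x2, K x1 x2 * ent (W1 x1 x2) = condEntFull P W1 := by
    unfold condEntFull
    refine Finset.sum_congr rfl fun x1 _ => ?_
    rw [Finset.mul_sum]
    exact Finset.sum_congr rfl fun x2 _ => by rw [hPdef]; ring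
  have e4 : ∑ x1, Pstar x1 * ∑ x2, Kbar x2 * ent (W1 x1 x2) = condEntFull Q W1 := by
    unfold condEntFull
    refine Finset.sum_congr rfl fun x1 _ => ?_
    rw [Finset.mul_sum]
    exact Finset.sum_congr rfl fun x2 _ => by rw [hQdef]; ring
  simp_rw [hdec, hdec2, mul_sub, Finset.sum_sub_distrib]
  rw [e1, e2, e3, e4, hEnt]
  linarith

end TWC
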